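/- (Consistency.) (a) If 1 ≤ i ≤ K−1 and g_i ≤ 1/(h_{i+1}·√P), then g_{i−1} ≤ 1/(h_i·√P). (b) If 1 ≤ i ≤ K−1 and g_i > 1/(h_i·√P), then g_{i+1} > 1/(h_{i+1}·√P). -/
import Mathlib


open Finset

/-- `g₀ = 0` and `g_i = √P (∑_{k=1}^i h_k)/(σ² + P ∑_{k=1}^i h_k²)`. -/
noncomputable def g (h : ℕ → ℝ) (P σ : ℝ) (i : ℕ) : ℝ :=
  Real.sqrt P * (∑ k ∈ Finset.Icc 1 i, h k) /
    (σ ^ 2 + P * ∑ k ∈ Finset.Icc 1 i, (h k) ^ 2)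

theorem stmt_5 (K : ℕ) (hK : 1 ≤ K) (h : ℕ → ℝ) (P σ : ℝ) (hP : 0 < P) (hσ : 0 < σ)
    (hpos : 0 < h 1) (hmono : ∀ k, 1 ≤ k → k < K → h k ≤ h (k + 1)) :
    -- (a)
    (∀ i, 1 ≤ i → i ≤ K - 1 → g h P σ i ≤ 1 / (h (i + 1) * Real.sqrt P) →
      g h P σ (i - 1) ≤ 1 / (h i * Real.sqrt P)) ∧
    -- (b)
    (∀ i, 1 ≤ i → i ≤ K - 1 → 1 / (h i * Real.sqrt P) < g h P σ i →
      1 / (h (i + 1) * Real.sqrt P) < g h P σ (i + 1)) := by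
  set s := Real.sqrt P with hs
  have sP : 0 < s := Real.sqrt_pos.mpr hP
  have hs2 : s ^ 2 = P := Real.sq_sqrt hP.le
  -- positivity of channel gains
  have hp : ∀ k, 1 ≤ k → k ≤ K → 0 < h k := by
    intro k
    induction k with
    | zero => intro h1 _; omega
    | succ n ih =>
      intro _ hkK
      by_cases hn : n = 0
      · subst hn; exact hpos
      · exact lt_of_lt_of_le (ih (by omega) (by omega)) (hmono n (by omega) (by omega))
  have hS : ∀ i, i ≤ K → 0 ≤ ∑ k ∈ Finset.Icc 1 i, h k := by
    intro i hi
    refine Finset.sum_nonneg ?_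
    intro k hk
    simp only [Finset.mem_Icc] at hk
    exact (hp k hk.1 (hk.2.trans hi)).le
  have hQ : ∀ i : ℕ, 0 < σ ^ 2 + P * ∑ k ∈ Finset.Icc 1 i, (h k) ^ 2 := by
    intro i
    have hnn : 0 ≤ ∑ k ∈ Finset.Icc 1 i, (h k) ^ 2 :=
      Finset.sum_nonneg fun k _ => sq_nonneg _
    have := mul_nonneg hP.le hnn
    nlinarith [sq_nonneg σ, pow_pos hσ 2]
  have key : ∀ x y Q : ℝ, 0 < x → 0 < Q →
      (s * y / Q ≤ 1 / (x * s) ↔ P * x * y ≤ Q) := by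
    intro x y Q hx hQ'
    rw [div_le_div_iff₀ hQ' (mul_pos hx sP), one_mul,
      show s * y * (x * s) = P * x * y from by rw [← hs2]; ring]
  have key' : ∀ x y Q : ℝ, 0 < x → 0 < Q →
      (1 / (x * s) < s * y / Q ↔ Q < P * x * y) := by
    intro x y Q hx hQ'
    rw [div_lt_div_iff₀ (mul_pos hx sP) hQ', one_mul,
      show s * y * (x * s) = P * x * y from by rw [← hs2]; ring]
  constructor
  · -- part (a)
    intro i hi1 hiK hyp
    obtain ⟨m, rfl⟩ : ∃ m, i = m + 1 := ⟨i - 1, by omega⟩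
    have hm1K : m + 1 ≤ K := by omega
    have hm2K : m + 2 ≤ K := by omega
    have hA : 0 ≤ ∑ k ∈ Finset.Icc 1 m, h k := hS m (by omega)
    have hh1 : 0 < h (m + 1) := hp (m + 1) (by omega) hm1K
    have hh2 : 0 < h (m + 2) := hp (m + 2) (by omega) hm2K
    have hle : h (m + 1) ≤ h (m + 2) := hmono (m + 1) (by omega) (by omega)
    simp only [g, ← hs] at hyp ⊢
    rw [key _ _ _ hh2 (hQ (m + 1))] at hyp
    simp only [Nat.add_sub_cancel]
    rw [key _ _ _ hh1 (hQ m)]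
    rw [Finset.sum_Icc_succ_top (by omega : 1 ≤ m + 1) h,
      Finset.sum_Icc_succ_top (by omega : 1 ≤ m + 1) (fun k => (h k) ^ 2)] at hyp
    nlinarith [mul_nonneg (mul_nonneg hP.le (sub_nonneg.2 hle)) hA,
      mul_nonneg (mul_nonneg hP.le (sub_nonneg.2 hle)) hh1.le]
  · -- part (b)
    intro i hi1 hiK hyp
    have hiK' : i + 1 ≤ K := by omega
    have hSi : 0 ≤ ∑ k ∈ Finset.Icc 1 i, h k := hS i (by omega)
    have hh1 : 0 < h i := hp i hi1 (by omega)
    have hh2 : 0 < h (i + 1) := hp (i + 1) (by omega) hiK'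
    have hle : h i ≤ h (i + 1) := hmono i hi1 (by omega)
    simp only [g, ← hs] at hyp ⊢
    rw [key' _ _ _ hh1 (hQ i)] at hyp
    rw [key' _ _ _ hh2 (hQ (i + 1))]
    rw [Finset.sum_Icc_succ_top (by omega : 1 ≤ i + 1) h,
      Finset.sum_Icc_succ_top (by omega : 1 ≤ i + 1) (fun k => (h k) ^ 2)]
    nlinarith [mul_nonneg (mul_nonneg hP.le (sub_nonneg.2 hle)) hSi]
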